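/- For the secant iteration applied to f(x) = x², namely x_{n+1} = x_n - x_n²/(x_n + x_{n-1}), the ratio k_n = x_{n+1}/x_n satisfies the recurrence k_n = 1 - k_{n-1}/(k_{n-1} + 1). Moreover, k* = -(1+√5)/2 is a fixed point of this recurrence, and if the initial values satisfy x_1/x_0 = k*, then x_n = (k*)^n · x_0 for all n, so the sequence {x_n} diverges (|x_n| → ∞) whenever x_0 ≠ 0. -/

import Mathlib

open Filter Topology

theorem secant_xsq_divergence (x : ℕ → ℝ)
    (hx0 : ∀ n, x n ≠ 0)
    (hxsum : ∀ n, x (n + 1) + x n ≠ 0)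
    (hrec : ∀ n, x (n + 2) = x (n + 1) - (x (n + 1)) ^ 2 / (x (n + 1) + x n)) :
    (∀ n, x (n + 2) / x (n + 1) =
      1 - (x (n + 1) / x n) / ((x (n + 1) / x n) + 1)) ∧
    (1 - (-(1 + Real.sqrt 5) / 2) / ((-(1 + Real.sqrt 5) / 2) + 1)
      = -(1 + Real.sqrt 5) / 2) ∧
    (x 1 / x 0 = -(1 + Real.sqrt 5) / 2 →
      (∀ n, x n = (-(1 + Real.sqrt 5) / 2) ^ n * x 0) ∧
      Tendsto (fun n => |x n|) atTop atTop) := by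
  have hs5 : Real.sqrt 5 ^ 2 = 5 := Real.sq_sqrt (by norm_num)
  have hs5gt : (1:ℝ) < Real.sqrt 5 := by
    nlinarith [Real.sqrt_nonneg 5]
  set k : ℝ := -(1 + Real.sqrt 5) / 2 with hk
  have hk1 : k + 1 ≠ 0 := by
    rw [hk]; intro h; nlinarith
  have hkid : k ^ 2 + k = 1 := by rw [hk]; nlinarith
  have hratio : ∀ n, x (n + 2) / x (n + 1) =
      1 - (x (n + 1) / x n) / ((x (n + 1) / x n) + 1) := by
    intro n
    have hxn := hx0 n; have hxn1 := hx0 (n+1); have hs := hxsum n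
    have h1 : x (n + 1) / x n + 1 = (x (n + 1) + x n) / x n := by
      field_simp
    rw [hrec n, h1]
    field_simp
  refine ⟨hratio, by field_simp; nlinarith, ?_⟩
  intro hinit
  have hform : ∀ n, x n = k ^ n * x 0 := by
    intro n
    induction n using Nat.strong_induction_on with
    | _ n ih =>
      match n with
      | 0 => simp
      | 1 =>
        have h := (div_eq_iff (hx0 0)).mp hinit
        rw [pow_one]; exact h
      | (m + 2) =>
        have h1 : x (m + 1) = k ^ (m + 1) * x 0 := ih (m + 1) (by omega)
        have h0 : x m = k ^ m * x 0 := ih m (by omega)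
        have hsum := hxsum m
        rw [h1, h0] at hsum
        rw [hrec m, h1, h0]
        have hq : (k ^ (m + 1) * x 0) ^ 2 / (k ^ (m + 1) * x 0 + k ^ m * x 0)
            = k ^ (m + 1) * x 0 - k ^ (m + 2) * x 0 := by
          rw [div_eq_iff hsum]
          linear_combination (x 0 ^ 2 * k ^ (2*m+1)) * hkid
        rw [hq]; ring
  refine ⟨hform, ?_⟩
  have hkabs : 1 < |k| := by
    rw [hk, abs_div, abs_neg]
    rw [abs_of_pos (by linarith), abs_of_pos (by norm_num : (0:ℝ) < 2)]
    linarith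
  have hx0pos : 0 < |x 0| := abs_pos.mpr (hx0 0)
  have : Tendsto (fun n => |k| ^ n * |x 0|) atTop atTop :=
    (tendsto_pow_atTop_atTop_of_one_lt hkabs).atTop_mul_const hx0pos
  refine this.congr fun n => ?_
  rw [hform n, abs_mul, abs_pow]
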